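/- The Whitney metric d_μ is topologically equivalent to the Hausdorff metric on 2^X: a sequence of nonempty closed subsets converges in d_μ if and only if it converges in d_H. -/

import Mathlib

open Metric Filter

section Aux

variable {X : Type*} [MetricSpace X] [CompactSpace X]

/-- In a compact metric space, Hausdorff edistances between nonempty sets are finite. -/
lemma whit_hEdist_ne_top (S T : Set X) (hS : S.Nonempty) (hT : T.Nonempty) :
    EMetric.hausdorffEdist S T ≠ ⊤ :=
  Metric.hausdorffEdist_ne_top_of_nonempty_of_bounded hS hT
    Metric.isBounded_of_compactSpace Metric.isBounded_of_compactSpace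

/-- Taking unions with a fixed set is 1-Lipschitz for the Hausdorff distance. -/
lemma whit_hDist_union_le (S T C : Set X) (hS : S.Nonempty) (hT : T.Nonempty) :
    hausdorffDist (S ∪ C) (T ∪ C) ≤ hausdorffDist S T := by
  have key : ∀ U V : Set X, ∀ x ∈ U ∪ C,
      EMetric.infEdist x (V ∪ C) ≤ EMetric.hausdorffEdist U V := by
    rintro U V x (hx | hx)
    · calc EMetric.infEdist x (V ∪ C) ≤ EMetric.infEdist x V := by
            exact EMetric.infEdist_union.trans_le inf_le_left
        _ ≤ EMetric.hausdorffEdist U V := EMetric.infEdist_le_hausdorffEdist_of_mem hx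
    · calc EMetric.infEdist x (V ∪ C) ≤ EMetric.infEdist x C := by
            exact EMetric.infEdist_union.trans_le inf_le_right
        _ = 0 := EMetric.infEdist_zero_of_mem hx
        _ ≤ _ := zero_le
  have h : EMetric.hausdorffEdist (S ∪ C) (T ∪ C) ≤ EMetric.hausdorffEdist S T := by
    refine EMetric.hausdorffEdist_le_of_infEdist (key S T) ?_
    intro x hx
    calc EMetric.infEdist x (S ∪ C) ≤ EMetric.hausdorffEdist T S := key T S x hx
      _ = EMetric.hausdorffEdist S T := EMetric.hausdorffEdist_comm
  exact ENNReal.toReal_mono (whit_hEdist_ne_top S T hS hT) h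

/-- Continuity of μ along a sequence converging in Hausdorff distance. -/
lemma whit_tendsto_mu (μ : Set X → ℝ) (T : Set X) (hT : T.Nonempty) (hTc : IsClosed T)
    (hcont : ∀ ε > 0, ∃ δ > 0, ∀ B : Set X, B.Nonempty → IsClosed B →
      hausdorffDist T B < δ → |μ T - μ B| < ε)
    (S : ℕ → Set X) (hS : ∀ n, (S n).Nonempty ∧ IsClosed (S n))
    (h : Tendsto (fun n => hausdorffDist (S n) T) atTop (nhds 0)) :
    Tendsto (fun n => μ (S n)) atTop (nhds (μ T)) := by
  rw [Metric.tendsto_atTop] at h ⊢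
  intro ε hε
  obtain ⟨δ, hδ, hδ'⟩ := hcont ε hε
  obtain ⟨N, hN⟩ := h δ hδ
  refine ⟨N, fun n hn => ?_⟩
  have hd : hausdorffDist T (S n) < δ := by
    have := hN n hn
    rw [Real.dist_eq, sub_zero, abs_of_nonneg hausdorffDist_nonneg] at this
    rwa [hausdorffDist_comm]
  have := hδ' (S n) (hS n).1 (hS n).2 hd
  rw [Real.dist_eq, abs_sub_comm]
  exact this

/-- μ is monotone under unions, given strict monotonicity for proper inclusions. -/
lemma whit_mono (μ : Set X → ℝ)
    (hb : ∀ A B : Set X, A.Nonempty → IsClosed A → B.Nonempty → IsClosed B →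
      A ⊂ B → μ A < μ B)
    (A B : Set X) (hA : A.Nonempty) (hAc : IsClosed A) (hBc : IsClosed B) :
    μ A ≤ μ (A ∪ B) := by
  by_cases hAB : A ∪ B = A
  · rw [hAB]
  · refine le_of_lt (hb A (A ∪ B) hA hAc (hA.mono Set.subset_union_left)
      (hAc.union hBc) ⟨Set.subset_union_left, fun h => hAB (le_antisymm h Set.subset_union_left)⟩)

end Aux

/-- The Whitney metric `d_μ` is topologically equivalent to the Hausdorff metric on
`2^X`: a sequence of nonempty closed subsets converges in `d_μ` if and only if it
converges in Hausdorff distance. -/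
theorem whitney_metric_equiv_hausdorff
    {X : Type*} [MetricSpace X] [CompactSpace X] [ConnectedSpace X] [Nonempty X]
    (μ : Set X → ℝ)
    (ha : ∀ x : X, μ {x} = 0)
    (hb : ∀ A B : Set X, A.Nonempty → IsClosed A → B.Nonempty → IsClosed B →
      A ⊂ B → μ A < μ B)
    (hc : ∀ A B : Set X, A.Nonempty → IsClosed A → B.Nonempty → IsClosed B →
      (A ∩ B).Nonempty → μ (A ∪ B) ≤ μ A + μ B - μ (A ∩ B))
    -- continuity of μ with respect to the Hausdorff metric
    (hcont : ∀ A : Set X, A.Nonempty → IsClosed A → ∀ ε > 0, ∃ δ > 0,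
      ∀ B : Set X, B.Nonempty → IsClosed B → hausdorffDist A B < δ →
        |μ A - μ B| < ε)
    (dμ : Set X → Set X → ℝ)
    (hd : ∀ A B : Set X, dμ A B = max (μ (A ∪ B) - μ A) (μ (A ∪ B) - μ B))
    (A : ℕ → Set X) (A₀ : Set X)
    (hAn : ∀ n, (A n).Nonempty ∧ IsClosed (A n))
    (hA₀ : A₀.Nonempty ∧ IsClosed A₀) :
    Tendsto (fun n => dμ (A n) A₀) atTop (nhds 0) ↔
      Tendsto (fun n => hausdorffDist (A n) A₀) atTop (nhds 0) := by
  obtain ⟨hA₀n, hA₀c⟩ := hA₀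
  constructor
  · -- hard direction: dμ → 0 ⇒ Hausdorff → 0
    intro h
    by_contra hcon
    rw [Metric.tendsto_atTop] at hcon
    push_neg at hcon
    obtain ⟨ε, hε, hfreq⟩ := hcon
    have hfr : ∃ᶠ n in atTop, ε ≤ hausdorffDist (A n) A₀ := by
      rw [Filter.frequently_atTop]
      intro N
      obtain ⟨n, hn, hn'⟩ := hfreq N
      rw [Real.dist_eq, sub_zero, abs_of_nonneg hausdorffDist_nonneg] at hn'
      exact ⟨n, hn, hn'⟩
    obtain ⟨φ, hφ, hφP⟩ := Filter.extraction_of_frequently_atTop hfr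
    set K : ℕ → TopologicalSpace.NonemptyCompacts X :=
      fun j => ⟨⟨A (φ j), ((hAn (φ j)).2).isCompact⟩, (hAn (φ j)).1⟩ with hK
    obtain ⟨B, -, ψ, hψ, htend⟩ :=
      isCompact_univ.tendsto_subseq (x := K) (fun n => Set.mem_univ _)
    set B₀ : Set X := ↑B with hB₀
    have hB₀n : B₀.Nonempty := B.nonempty
    have hB₀c : IsClosed B₀ := B.isCompact.isClosed
    -- Hausdorff convergence of the sub-subsequence to B₀
    have hBd : Tendsto (fun j => hausdorffDist (A (φ (ψ j))) B₀) atTop (nhds 0) := by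
      have := tendsto_iff_dist_tendsto_zero.1 htend
      simp only [Function.comp, Metric.NonemptyCompacts.dist_eq] at this
      exact this
    -- μ converges along the sub-subsequence
    have m1 : Tendsto (fun j => μ (A (φ (ψ j)))) atTop (nhds (μ B₀)) :=
      whit_tendsto_mu μ B₀ hB₀n hB₀c (hcont B₀ hB₀n hB₀c) _
        (fun j => hAn (φ (ψ j))) hBd
    have hBd2 : Tendsto (fun j => hausdorffDist (A (φ (ψ j)) ∪ A₀) (B₀ ∪ A₀)) atTop (nhds 0) := by
      refine squeeze_zero (fun j => hausdorffDist_nonneg) (fun j => ?_) hBd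
      exact whit_hDist_union_le _ _ _ (hAn (φ (ψ j))).1 hB₀n
    have m2 : Tendsto (fun j => μ (A (φ (ψ j)) ∪ A₀)) atTop (nhds (μ (B₀ ∪ A₀))) :=
      whit_tendsto_mu μ (B₀ ∪ A₀) (hB₀n.mono Set.subset_union_left) (hB₀c.union hA₀c)
        (hcont _ (hB₀n.mono Set.subset_union_left) (hB₀c.union hA₀c)) _
        (fun j => ⟨(hAn _).1.mono Set.subset_union_left, (hAn _).2.union hA₀c⟩) hBd2
    -- dμ along the sub-subsequence converges to the dμ of the limits
    have dcv : Tendsto (fun j => dμ (A (φ (ψ j))) A₀) atTop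
        (nhds (max (μ (B₀ ∪ A₀) - μ B₀) (μ (B₀ ∪ A₀) - μ A₀))) := by
      simp only [hd]
      exact (m2.sub m1).max (m2.sub tendsto_const_nhds)
    have h0 : Tendsto (fun j => dμ (A (φ (ψ j))) A₀) atTop (nhds 0) :=
      h.comp ((hφ.comp hψ).tendsto_atTop)
    have hmax : max (μ (B₀ ∪ A₀) - μ B₀) (μ (B₀ ∪ A₀) - μ A₀) = 0 :=
      tendsto_nhds_unique dcv h0
    have e1 : μ (B₀ ∪ A₀) - μ B₀ = 0 :=
      le_antisymm (hmax ▸ le_max_left _ _)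
        (by linarith [whit_mono μ hb B₀ A₀ hB₀n hB₀c hA₀c])
    have e2 : μ (B₀ ∪ A₀) - μ A₀ = 0 := by
      have : μ A₀ ≤ μ (A₀ ∪ B₀) := whit_mono μ hb A₀ B₀ hA₀n hA₀c hB₀c
      rw [Set.union_comm] at this
      exact le_antisymm (hmax ▸ le_max_right _ _) (by linarith)
    -- conclude B₀ = A₀
    have hsub1 : A₀ ⊆ B₀ := by
      by_contra hns
      have hss : B₀ ⊂ B₀ ∪ A₀ :=
        ⟨Set.subset_union_left, fun hle => hns fun x hx => hle (Or.inr hx)⟩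
      have := hb B₀ (B₀ ∪ A₀) hB₀n hB₀c (hB₀n.mono Set.subset_union_left)
        (hB₀c.union hA₀c) hss
      linarith
    have hsub2 : B₀ ⊆ A₀ := by
      by_contra hns
      have hss : A₀ ⊂ B₀ ∪ A₀ :=
        ⟨Set.subset_union_right, fun hle => hns fun x hx => hle (Or.inl hx)⟩
      have := hb A₀ (B₀ ∪ A₀) hA₀n hA₀c (hB₀n.mono Set.subset_union_left)
        (hB₀c.union hA₀c) hss
      linarith
    have hBA : B₀ = A₀ := le_antisymm hsub2 hsub1
    -- contradiction with ε ≤ hausdorffDist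
    rw [hBA] at hBd
    rw [Metric.tendsto_atTop] at hBd
    obtain ⟨N, hN⟩ := hBd ε hε
    have := hN N le_rfl
    rw [Real.dist_eq, sub_zero, abs_of_nonneg hausdorffDist_nonneg] at this
    exact absurd this (not_lt.2 (hφP (ψ N)))
  · -- easy direction: Hausdorff → 0 ⇒ dμ → 0
    intro h
    have m1 : Tendsto (fun n => μ (A n)) atTop (nhds (μ A₀)) :=
      whit_tendsto_mu μ A₀ hA₀n hA₀c (hcont A₀ hA₀n hA₀c) A hAn h
    have hBd2 : Tendsto (fun n => hausdorffDist (A n ∪ A₀) A₀) atTop (nhds 0) := by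
      refine squeeze_zero (fun n => hausdorffDist_nonneg) (fun n => ?_) h
      have := whit_hDist_union_le (A n) A₀ A₀ (hAn n).1 hA₀n
      rwa [Set.union_self] at this
    have m2 : Tendsto (fun n => μ (A n ∪ A₀)) atTop (nhds (μ A₀)) :=
      whit_tendsto_mu μ A₀ hA₀n hA₀c (hcont A₀ hA₀n hA₀c) _
        (fun n => ⟨(hAn n).1.mono Set.subset_union_left, (hAn n).2.union hA₀c⟩) hBd2
    have : Tendsto (fun n => dμ (A n) A₀) atTop (nhds (max (μ A₀ - μ A₀) (μ A₀ - μ A₀))) := by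
      simp only [hd]
      exact (m2.sub m1).max (m2.sub tendsto_const_nhds)
    simpa using this
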